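/- In the Gripper domain, the learned abstract action set over features X (robot in target room), B (number of balls not in the target room), C (number of balls carried), and G (number of free grippers) is sound: in any reachable state of any two-room Gripper instance, (i) if C>0 and X, dropping a carried ball in the target room is applicable, decreases C by 1, increases G by 1, and leaves B unchanged; (ii) if ¬X, B>0 and G>0, picking a ball in the non-target room is applicable, decreases B and G by 1 and increases C by 1; (iii) if ¬X and C>0, moving to the target room is applicable and makes X true without changing B, C, G; (iv) if X, C=0 and G>0, leaving the target room is applicable and makes X false without changing B, C, G. -/

import Mathlib

/-- A Gripper state: the room of the robot (`true` = target room x) and the location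
of each ball (a room, or a gripper carrying it). -/
structure GState (Ball Grip : Type) where
  robot : Bool
  loc : Ball → Bool ⊕ Grip

/-- Consistency: each gripper carries at most one ball. -/
def WF {Ball Grip : Type} (s : GState Ball Grip) : Prop :=
  ∀ b b' g, s.loc b = Sum.inr g → s.loc b' = Sum.inr g → b = b'

/-- X: the robot is in the target room. -/
def Xf {Ball Grip : Type} (s : GState Ball Grip) : Prop := s.robot = true

/-- B: number of balls in the non-target room. -/
def Bf {Ball Grip : Type} [Fintype Ball] [DecidableEq Ball] [DecidableEq Grip]
    (s : GState Ball Grip) : ℕ :=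
  (Finset.univ.filter fun b : Ball => s.loc b = Sum.inl false).card

/-- C: number of balls being carried. -/
def Cf {Ball Grip : Type} [Fintype Ball] [Fintype Grip] [DecidableEq Ball]
    [DecidableEq Grip] (s : GState Ball Grip) : ℕ :=
  (Finset.univ.filter fun b : Ball => ∃ g, s.loc b = Sum.inr g).card

/-- G: number of free grippers. -/
def Gf {Ball Grip : Type} [Fintype Ball] [Fintype Grip] [DecidableEq Ball]
    [DecidableEq Grip] (s : GState Ball Grip) : ℕ :=
  (Finset.univ.filter fun g : Grip => ∀ b, s.loc b ≠ Sum.inr g).card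

inductive GAct (Ball Grip : Type)
  | move (r : Bool)
  | pick (b : Ball) (g : Grip)
  | drop (b : Ball) (g : Grip)

def gApp {Ball Grip : Type} (s : GState Ball Grip) : GAct Ball Grip → Prop
  | .move r => r ≠ s.robot
  | .pick b g => s.loc b = Sum.inl s.robot ∧ ∀ b', s.loc b' ≠ Sum.inr g
  | .drop b g => s.loc b = Sum.inr g

def gSucc {Ball Grip : Type} [DecidableEq Ball] (s : GState Ball Grip) :
    GAct Ball Grip → GState Ball Grip
  | .move r => { s with robot := r }
  | .pick b g => { s with loc := Function.update s.loc b (Sum.inr g) }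
  | .drop b _ => { s with loc := Function.update s.loc b (Sum.inl s.robot) }

/-- Soundness of the learned Gripper abstract actions. In any consistent
state: (i) if C>0 and X, dropping a carried ball is applicable, decreases C by 1,
increases G by 1, and leaves B unchanged; (ii) if ¬X, B>0 and G>0, picking a ball in
the non-target room is applicable, decreases B and G by 1 and increases C by 1;
(iii) if ¬X and C>0, moving to the target room is applicable and makes X true leaving
B, C, G unchanged; (iv) if X, C=0 and G>0, leaving the target room is applicable and
makes X false leaving B, C, G unchanged. -/
theorem stmt17 {Ball Grip : Type} [Fintype Ball] [Fintype Grip]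
    [DecidableEq Ball] [DecidableEq Grip]
    (s : GState Ball Grip) (hwf : WF s) :
    (0 < Cf s → Xf s → ∃ b g, gApp s (GAct.drop b g) ∧
      Cf (gSucc s (GAct.drop b g)) + 1 = Cf s ∧
      Gf (gSucc s (GAct.drop b g)) = Gf s + 1 ∧
      Bf (gSucc s (GAct.drop b g)) = Bf s) ∧
    (¬ Xf s → 0 < Bf s → 0 < Gf s → ∃ b g, gApp s (GAct.pick b g) ∧
      Bf (gSucc s (GAct.pick b g)) + 1 = Bf s ∧
      Gf (gSucc s (GAct.pick b g)) + 1 = Gf s ∧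
      Cf (gSucc s (GAct.pick b g)) = Cf s + 1) ∧
    (¬ Xf s → 0 < Cf s → gApp s (GAct.move true) ∧
      Xf (gSucc s (GAct.move true)) ∧
      Bf (gSucc s (GAct.move true)) = Bf s ∧
      Cf (gSucc s (GAct.move true)) = Cf s ∧
      Gf (gSucc s (GAct.move true)) = Gf s) ∧
    (Xf s → Cf s = 0 → 0 < Gf s → gApp s (GAct.move false) ∧
      ¬ Xf (gSucc s (GAct.move false)) ∧
      Bf (gSucc s (GAct.move false)) = Bf s ∧
      Cf (gSucc s (GAct.move false)) = Cf s ∧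
      Gf (gSucc s (GAct.move false)) = Gf s) := by
  refine ⟨?_, ?_, ?_, ?_⟩
  · -- drop
    intro hC hX
    obtain ⟨b, hbmem⟩ := Finset.card_pos.mp hC
    obtain ⟨g, hg⟩ := (Finset.mem_filter.mp hbmem).2
    refine ⟨b, g, hg, ?_, ?_, ?_⟩
    · -- Cf
      have hset : (Finset.univ.filter fun b' : Ball =>
          ∃ g', (Function.update s.loc b (Sum.inl s.robot)) b' = Sum.inr g') =
          (Finset.univ.filter fun b' : Ball => ∃ g', s.loc b' = Sum.inr g').erase b := by
        ext x
        by_cases hx : x = b <;> simp [Finset.mem_erase, Function.update_apply, hx]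
      have hmem : b ∈ Finset.univ.filter fun b' : Ball => ∃ g', s.loc b' = Sum.inr g' := by
        simp [hg]
      have hpos : 0 < (Finset.univ.filter fun b' : Ball => ∃ g', s.loc b' = Sum.inr g').card :=
        Finset.card_pos.mpr ⟨b, hmem⟩
      change (Finset.univ.filter fun b' : Ball => ∃ g', (Function.update s.loc b (Sum.inl s.robot)) b' = Sum.inr g').card + 1 = Cf s
      simp only [Cf, gSucc, hset]
      rw [Finset.card_erase_of_mem hmem]
      omega
    · -- Gf
      have hset : (Finset.univ.filter fun g' : Grip =>
          ∀ b', (Function.update s.loc b (Sum.inl s.robot)) b' ≠ Sum.inr g') =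
          insert g (Finset.univ.filter fun g' : Grip => ∀ b', s.loc b' ≠ Sum.inr g') := by
        ext x
        simp only [Finset.mem_filter, Finset.mem_univ, true_and, Finset.mem_insert,
          Function.update_apply]
        constructor
        · intro h
          by_cases hx : x = g
          · exact Or.inl hx
          · refine Or.inr fun b' hb' => ?_
            by_cases hb : b' = b
            · subst hb
              exact hx (Sum.inr.inj (hb'.symm.trans hg))
            · exact h b' (by simp [hb, hb'])
        · rintro (rfl | h) b'
          · by_cases hb : b' = b <;> simp [hb]
            intro hb'
            exact hb (hwf b' b x hb' hg)
          · by_cases hb : b' = b <;> simp [hb, h b']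
      have hnot : g ∉ Finset.univ.filter fun g' : Grip => ∀ b', s.loc b' ≠ Sum.inr g' := by
        simp
        exact ⟨b, hg⟩
      change (Finset.univ.filter fun g' : Grip => ∀ b', (Function.update s.loc b (Sum.inl s.robot)) b' ≠ Sum.inr g').card = Gf s + 1
      simp only [Gf, gSucc, hset]
      rw [Finset.card_insert_of_notMem hnot]
    · -- Bf
      have hset : (Finset.univ.filter fun b' : Ball =>
          (Function.update s.loc b (Sum.inl s.robot)) b' = Sum.inl false) =
          (Finset.univ.filter fun b' : Ball => s.loc b' = Sum.inl false) := by
        ext x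
        have hrobX : s.robot = true := hX
        by_cases hx : x = b <;> simp [Function.update_apply, hx, hg, hrobX]
      change (Finset.univ.filter fun b' : Ball => (Function.update s.loc b (Sum.inl s.robot)) b' = Sum.inl false).card = Bf s
      simp only [Bf, gSucc, hset]
  · -- pick
    intro hX hB hG
    have hrob : s.robot = false := by
      simp [Xf] at hX; exact hX
    obtain ⟨b, hbmem⟩ := Finset.card_pos.mp hB
    have hb : s.loc b = Sum.inl false := (Finset.mem_filter.mp hbmem).2
    obtain ⟨g, hgmem⟩ := Finset.card_pos.mp hG
    have hgfree : ∀ b', s.loc b' ≠ Sum.inr g := (Finset.mem_filter.mp hgmem).2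
    refine ⟨b, g, ⟨by rw [hrob]; exact hb, hgfree⟩, ?_, ?_, ?_⟩
    · -- Bf
      have hset : (Finset.univ.filter fun b' : Ball =>
          (Function.update s.loc b (Sum.inr g)) b' = Sum.inl false) =
          (Finset.univ.filter fun b' : Ball => s.loc b' = Sum.inl false).erase b := by
        ext x
        by_cases hx : x = b <;> simp [Finset.mem_erase, Function.update_apply, hx]
      have hpos : 0 < (Finset.univ.filter fun b' : Ball => s.loc b' = Sum.inl false).card :=
        Finset.card_pos.mpr ⟨b, hbmem⟩
      change (Finset.univ.filter fun b' : Ball => (Function.update s.loc b (Sum.inr g)) b' = Sum.inl false).card + 1 = Bf s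
      simp only [Bf, gSucc, hset]
      rw [Finset.card_erase_of_mem hbmem]
      omega
    · -- Gf
      have hset : (Finset.univ.filter fun g' : Grip =>
          ∀ b', (Function.update s.loc b (Sum.inr g)) b' ≠ Sum.inr g') =
          (Finset.univ.filter fun g' : Grip => ∀ b', s.loc b' ≠ Sum.inr g').erase g := by
        ext x
        simp only [Finset.mem_filter, Finset.mem_univ, true_and, Finset.mem_erase,
          Function.update_apply]
        constructor
        · intro h
          have hxg : x ≠ g := fun hxg => by
            have := h b; simp [hxg] at this
          refine ⟨hxg, fun b' => ?_⟩
          by_cases hbb : b' = b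
          · rw [hbb, hb]; simp
          · exact fun hb' => h b' (by simp [hbb, hb'])
        · rintro ⟨hxg, h⟩ b'
          by_cases hbb : b' = b <;> simp [hbb, h b', Ne.symm hxg]
      have hpos : 0 < (Finset.univ.filter fun g' : Grip => ∀ b', s.loc b' ≠ Sum.inr g').card :=
        Finset.card_pos.mpr ⟨g, hgmem⟩
      change (Finset.univ.filter fun g' : Grip => ∀ b', (Function.update s.loc b (Sum.inr g)) b' ≠ Sum.inr g').card + 1 = Gf s
      simp only [Gf, gSucc, hset]
      rw [Finset.card_erase_of_mem hgmem]
      omega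
    · -- Cf
      have hset : (Finset.univ.filter fun b' : Ball =>
          ∃ g', (Function.update s.loc b (Sum.inr g)) b' = Sum.inr g') =
          insert b (Finset.univ.filter fun b' : Ball => ∃ g', s.loc b' = Sum.inr g') := by
        ext x
        by_cases hx : x = b <;> simp [Finset.mem_insert, Function.update_apply, hx]
      have hnot : b ∉ Finset.univ.filter fun b' : Ball => ∃ g', s.loc b' = Sum.inr g' := by
        simp [hb]
      change (Finset.univ.filter fun b' : Ball => ∃ g', (Function.update s.loc b (Sum.inr g)) b' = Sum.inr g').card = Cf s + 1
      simp only [Cf, gSucc, hset]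
      rw [Finset.card_insert_of_notMem hnot]
  · -- move true
    intro hX _
    have hrob : s.robot = false := by simp [Xf] at hX; exact hX
    exact ⟨by simp [gApp, hrob], by simp [Xf, gSucc], rfl, rfl, rfl⟩
  · -- move false
    intro hX _ _
    have hrob : s.robot = true := hX
    exact ⟨by simp [gApp, hrob], by simp [Xf, gSucc], rfl, rfl, rfl⟩
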